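/- arXiv:2202.07929 — 2 statements merged into one kernel-verified Lean document; each statement's English description precedes it below -/
import Mathlib

section
/- Let p, q ≥ 1 be integers and let G be the graph whose vertex set is the disjoint union A ∪ B ∪ {s₁, s₂}, where |A| = 2q and |B| = 2p+1 and B is partitioned into two nonempty parts B₁ and B₂, and whose edges are exactly: all pairs of distinct vertices inside A (so A induces K_{2q}); all pairs of distinct vertices inside B (so B induces K_{2p+1}); all pairs with one endpoint in {s₁, s₂} and the other in A; all pairs with one endpoint s₁ and the other in B₁; and all pairs with one endpoint s₂ and the other in B₂ (in particular s₁ and s₂ are not adjacent and there are no edges between A and B). Then G is edge-critical equimatchable. -/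
open SimpleGraph

/-- `M` is a maximal matching of `G` (viewed as a subgraph of `G`): it is a matching and it is
not properly contained in any other matching of `G`. -/
def IsMaximalMatching {V : Type*} (G : SimpleGraph V) (M : G.Subgraph) : Prop :=
  M.IsMatching ∧ ∀ M' : G.Subgraph, M'.IsMatching → M ≤ M' → M' = M

/-- `G` is equimatchable if all maximal matchings of `G` have the same cardinality. -/
def Equimatchable {V : Type*} (G : SimpleGraph V) : Prop :=
  ∀ M₁ M₂ : G.Subgraph, IsMaximalMatching G M₁ → IsMaximalMatching G M₂ →
    M₁.edgeSet.ncard = M₂.edgeSet.ncard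

/-- The matching number ν(G): the maximum cardinality of a matching of `G`. -/
noncomputable def matchNum {V : Type*} (G : SimpleGraph V) : ℕ :=
  sSup {n : ℕ | ∃ M : G.Subgraph, M.IsMatching ∧ M.edgeSet.ncard = n}

/-- `G` is vertex-critical equimatchable (VCE): `G` is equimatchable and deleting any vertex
yields a non-equimatchable graph. -/
def VCE {V : Type*} (G : SimpleGraph V) : Prop :=
  Equimatchable G ∧ ∀ v : V, ¬ Equimatchable (G.induce {u | u ≠ v})

/-- `G` is edge-critical equimatchable (ECE): `G` is equimatchable and deleting any edge
yields a non-equimatchable graph. -/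
def ECE {V : Type*} (G : SimpleGraph V) : Prop :=
  Equimatchable G ∧ ∀ u v : V, G.Adj u v → ¬ Equimatchable (G.deleteEdges {s(u, v)})

/-- `G` is factor-critical: deleting any vertex yields a graph with a perfect matching. -/
def FactorCritical {V : Type*} (G : SimpleGraph V) : Prop :=
  ∀ v : V, ∃ M : (G.induce {u | u ≠ v}).Subgraph, M.IsPerfectMatching

/-- `G` is 2-connected: at least 3 vertices, connected, and deleting any vertex leaves a
connected graph. -/
def TwoConnected {V : Type*} [Fintype V] (G : SimpleGraph V) : Prop :=
  3 ≤ Fintype.card V ∧ G.Connected ∧ ∀ v : V, (G.induce {u | u ≠ v}).Connected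

/-- `G` is bipartite: its vertex set can be partitioned into two parts such that every edge
joins the two parts. -/
def IsBipartiteGraph {V : Type*} (G : SimpleGraph V) : Prop :=
  ∃ s : Set V, ∀ u w : V, G.Adj u w → (u ∈ s ↔ w ∉ s)

/-- `G` is randomly matchable: every matching of `G` extends to a perfect matching. -/
def RandomlyMatchable {V : Type*} (G : SimpleGraph V) : Prop :=
  ∀ M : G.Subgraph, M.IsMatching → ∃ P : G.Subgraph, M ≤ P ∧ P.IsPerfectMatching

lemma tiece_maxmatch_iff {V : Type*} {H : SimpleGraph V} {M : H.Subgraph}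
    (hM : M.IsMatching) :
    IsMaximalMatching H M ↔ ∀ u v, u ∉ M.verts → v ∉ M.verts → ¬ H.Adj u v := by
  constructor
  · rintro ⟨-, hmax⟩ u v hu hv hadj
    have hm2 := SimpleGraph.Subgraph.IsMatching.subgraphOfAdj hadj
    have hsup : (M ⊔ H.subgraphOfAdj hadj).IsMatching := by
      apply hM.sup hm2
      rw [hM.support_eq_verts, hm2.support_eq_verts, subgraphOfAdj_verts]
      rw [Set.disjoint_right]
      rintro x (rfl | rfl) <;> assumption
    have := hmax _ hsup le_sup_left
    apply hu
    have hu' : u ∈ (M ⊔ H.subgraphOfAdj hadj).verts := by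
      rw [Subgraph.verts_sup, subgraphOfAdj_verts]; right; left; rfl
    rwa [this] at hu'
  · intro hind
    refine ⟨hM, fun M' hM' hle => ?_⟩
    have hverts : M'.verts = M.verts := by
      apply Set.eq_of_subset_of_subset _ hle.1
      intro x hx
      by_contra hxM
      obtain ⟨y, hy, -⟩ := hM' hx
      have hyM : y ∉ M.verts := by
        intro hyM
        obtain ⟨z, hz, huniq⟩ := hM hyM
        have hz' : M'.Adj y z := hle.2 hz
        have hyv : y ∈ M'.verts := M'.edge_vert hy.symm
        have : x = z := by
          obtain ⟨w, hw, huniq'⟩ := hM' hyv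
          rw [huniq' x hy.symm, huniq' z hz']
        exact hxM (this ▸ M.edge_vert (hz.symm))
      exact hind x y hxM hyM (M'.adj_sub hy)
    apply SimpleGraph.Subgraph.ext hverts
    ext x y
    constructor
    · intro hxy
      have hx : x ∈ M.verts := hverts ▸ M'.edge_vert hxy
      obtain ⟨z, hz, huniq⟩ := hM hx
      obtain ⟨w, hw, huniq'⟩ := hM' (hle.1 hx)
      have h1 : y = w := huniq' y hxy
      have h2 : z = w := huniq' z (hle.2 hz)
      rwa [h1, ← h2]
    · exact fun h => hle.2 h


lemma tiece_matching_card {V : Type*} [Fintype V] {H : SimpleGraph V} {M : H.Subgraph}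
    (hM : M.IsMatching) : M.verts.ncard = 2 * M.edgeSet.ncard := by
  classical
  have hvfin : M.verts.Finite := Set.toFinite _
  have hefin : M.edgeSet.Finite := Set.toFinite _
  rw [Set.ncard_eq_toFinset_card _ hvfin, Set.ncard_eq_toFinset_card _ hefin]
  set f : V → Sym2 V := fun v => if h : v ∈ M.verts then s(v, (hM h).choose) else s(v, v) with hf
  have hmem : ∀ v ∈ hvfin.toFinset, f v ∈ hefin.toFinset := by
    intro v hv
    rw [Set.Finite.mem_toFinset] at hv ⊢
    simp only [hf, dif_pos hv]
    exact (hM hv).choose_spec.1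
  rw [Finset.card_eq_sum_card_fiberwise hmem]
  rw [Finset.sum_congr rfl (g := fun _ => 2), Finset.sum_const, smul_eq_mul, mul_comm]
  intro e he
  rw [Set.Finite.mem_toFinset] at he
  induction e with
  | _ x y =>
    have hxy : M.Adj x y := he
    have hx : x ∈ M.verts := M.edge_vert hxy
    have hy : y ∈ M.verts := M.edge_vert hxy.symm
    have hfilter : hvfin.toFinset.filter (fun v => f v = s(x, y)) = {x, y} := by
      ext v
      simp only [Finset.mem_filter, Set.Finite.mem_toFinset, Finset.mem_insert,
        Finset.mem_singleton]
      constructor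
      · rintro ⟨hv, hfv⟩
        simp only [hf, dif_pos hv] at hfv
        have := Sym2.eq_iff.mp hfv
        tauto
      · rintro (rfl | rfl)
        · refine ⟨hx, ?_⟩
          simp only [hf, dif_pos hx]
          rw [((hM hx).choose_spec.2 y hxy)]
        · refine ⟨hy, ?_⟩
          simp only [hf, dif_pos hy]
          rw [((hM hy).choose_spec.2 x hxy.symm)]
          rw [Sym2.eq_swap]
    rw [hfilter, Finset.card_insert_of_notMem (by simp [hxy.ne]), Finset.card_singleton]


lemma tiece_clique_matching {V : Type*} [Fintype V] (H : SimpleGraph V) :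
    ∀ (n : ℕ) (S : Set V), S.ncard = 2 * n →
      (∀ x ∈ S, ∀ y ∈ S, x ≠ y → H.Adj x y) →
      ∃ M : H.Subgraph, M.IsMatching ∧ M.verts = S := by
  intro n
  induction n with
  | zero =>
    intro S hcard _
    rw [mul_zero, Set.ncard_eq_zero (Set.toFinite _)] at hcard
    refine ⟨⊥, fun v hv => absurd hv (by simp), by simp [hcard]⟩
  | succ n ih =>
    intro S hcard hclique
    have hSfin : S.Finite := Set.toFinite _
    obtain ⟨x, hx⟩ : S.Nonempty := by
      rw [← Set.ncard_pos hSfin]; omega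
    obtain ⟨y, hy⟩ : (S \ {x}).Nonempty := by
      rw [← Set.ncard_pos hSfin.diff, Set.ncard_diff_singleton_of_mem hx]; omega
    have hyS : y ∈ S := hy.1
    have hyx : y ≠ x := hy.2
    have hadjxy : H.Adj x y := hclique x hx y hyS (Ne.symm hyx)
    set S' : Set V := S \ {x, y} with hS'
    have hS'card : S'.ncard = 2 * n := by
      have hsub : ({x, y} : Set V) ⊆ S := by
        rintro z (rfl | rfl) <;> assumption
      rw [hS', Set.ncard_diff hsub, Set.ncard_pair (Ne.symm hyx)]
      omega
    obtain ⟨M', hM', hM'verts⟩ := ih S' hS'card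
      (fun a ha b hb hab => hclique a ha.1 b hb.1 hab)
    have hm1 := SimpleGraph.Subgraph.IsMatching.subgraphOfAdj hadjxy
    refine ⟨H.subgraphOfAdj hadjxy ⊔ M', ?_, ?_⟩
    · apply hm1.sup hM'
      rw [hm1.support_eq_verts, hM'.support_eq_verts, subgraphOfAdj_verts, hM'verts]
      rw [Set.disjoint_left]
      rintro z (rfl | rfl) hz <;> exact hz.2 (by simp)
    · rw [Subgraph.verts_sup, subgraphOfAdj_verts, hM'verts, hS']
      exact Set.union_diff_cancel (by rintro z (rfl | rfl) <;> assumption)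


lemma tiece_clique_matchingE {V : Type*} [Fintype V] (H : SimpleGraph V) (S : Set V)
    (heven : Even S.ncard) (hclique : ∀ x ∈ S, ∀ y ∈ S, x ≠ y → H.Adj x y) :
    ∃ M : H.Subgraph, M.IsMatching ∧ M.verts = S := by
  obtain ⟨k, hk⟩ := heven
  exact tiece_clique_matching H k S (by omega) hclique

lemma tiece_msup {V : Type*} {H : SimpleGraph V} {M M' : H.Subgraph}
    (hM : M.IsMatching) (hM' : M'.IsMatching) (hd : Disjoint M.verts M'.verts) :
    (M ⊔ M').IsMatching := by
  apply hM.sup hM'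
  rwa [hM.support_eq_verts, hM'.support_eq_verts]

lemma tiece_build4 {V : Type*} [Fintype V] (H : SimpleGraph V) (S1 S2 S3 S4 : Set V)
    (he1 : Even S1.ncard) (he2 : Even S2.ncard) (he3 : Even S3.ncard) (he4 : Even S4.ncard)
    (hc1 : ∀ x ∈ S1, ∀ y ∈ S1, x ≠ y → H.Adj x y)
    (hc2 : ∀ x ∈ S2, ∀ y ∈ S2, x ≠ y → H.Adj x y)
    (hc3 : ∀ x ∈ S3, ∀ y ∈ S3, x ≠ y → H.Adj x y)
    (hc4 : ∀ x ∈ S4, ∀ y ∈ S4, x ≠ y → H.Adj x y)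
    (d12 : Disjoint S1 S2) (d13 : Disjoint S1 S3) (d14 : Disjoint S1 S4)
    (d23 : Disjoint S2 S3) (d24 : Disjoint S2 S4) (d34 : Disjoint S3 S4) :
    ∃ M : H.Subgraph, M.IsMatching ∧ M.verts = S1 ∪ S2 ∪ S3 ∪ S4 := by
  obtain ⟨M1, hm1, hv1⟩ := tiece_clique_matchingE H S1 he1 hc1
  obtain ⟨M2, hm2, hv2⟩ := tiece_clique_matchingE H S2 he2 hc2
  obtain ⟨M3, hm3, hv3⟩ := tiece_clique_matchingE H S3 he3 hc3
  obtain ⟨M4, hm4, hv4⟩ := tiece_clique_matchingE H S4 he4 hc4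
  have h12 := tiece_msup hm1 hm2 (by rw [hv1, hv2]; exact d12)
  have h123 := tiece_msup h12 hm3 (by
    rw [Subgraph.verts_sup, hv1, hv2, hv3]
    exact Set.disjoint_union_left.mpr ⟨d13, d23⟩)
  have h1234 := tiece_msup h123 hm4 (by
    rw [Subgraph.verts_sup, Subgraph.verts_sup, hv1, hv2, hv4]
    exact Set.disjoint_union_left.mpr ⟨Set.disjoint_union_left.mpr ⟨d14, d24⟩, hv3 ▸ d34⟩)
  exact ⟨M1 ⊔ M2 ⊔ M3 ⊔ M4, h1234, by
    simp only [Subgraph.verts_sup, hv1, hv2, hv3, hv4]⟩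

lemma sym2_ne_l {α : Type*} {x y u v : α} (hx : x ≠ u) (hy : y ≠ u) : s(x,y) ≠ s(u,v) := by
  intro h
  rcases Sym2.eq_iff.mp h with ⟨h1, h2⟩ | ⟨h1, h2⟩
  · exact hx h1
  · exact hy h2

lemma sym2_ne_r {α : Type*} {x y u v : α} (hx : x ≠ v) (hy : y ≠ v) : s(x,y) ≠ s(u,v) := by
  intro h
  rcases Sym2.eq_iff.mp h with ⟨h1, h2⟩ | ⟨h1, h2⟩
  · exact hy h2
  · exact hx h1



lemma tiece_assemble {V : Type*} [Fintype V] (H : SimpleGraph V) (S1 S2 S3 S4 U : Set V)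
    (he1 : Even S1.ncard) (he2 : Even S2.ncard) (he3 : Even S3.ncard) (he4 : Even S4.ncard)
    (hc1 : ∀ x ∈ S1, ∀ y ∈ S1, x ≠ y → H.Adj x y)
    (hc2 : ∀ x ∈ S2, ∀ y ∈ S2, x ≠ y → H.Adj x y)
    (hc3 : ∀ x ∈ S3, ∀ y ∈ S3, x ≠ y → H.Adj x y)
    (hc4 : ∀ x ∈ S4, ∀ y ∈ S4, x ≠ y → H.Adj x y)
    (d12 : Disjoint S1 S2) (d13 : Disjoint S1 S3) (d14 : Disjoint S1 S4)
    (d23 : Disjoint S2 S3) (d24 : Disjoint S2 S4) (d34 : Disjoint S3 S4)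
    (hvu : S1 ∪ S2 ∪ S3 ∪ S4 = Set.univ \ U)
    (hind : ∀ x ∈ U, ∀ y ∈ U, ¬H.Adj x y) :
    ∃ M : H.Subgraph, IsMaximalMatching H M ∧
      2 * M.edgeSet.ncard + U.ncard = (Set.univ : Set V).ncard := by
  obtain ⟨M, hM, hMv⟩ := tiece_build4 H S1 S2 S3 S4 he1 he2 he3 he4 hc1 hc2 hc3 hc4
    d12 d13 d14 d23 d24 d34
  rw [hvu] at hMv
  refine ⟨M, (tiece_maxmatch_iff hM).mpr ?_, ?_⟩
  · intro a b ha hb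
    rw [hMv] at ha hb
    simp only [Set.mem_diff, Set.mem_univ, true_and, not_not] at ha hb
    exact hind a ha b hb
  · have h2 := tiece_matching_card hM
    rw [hMv, Set.ncard_diff (Set.subset_univ U)] at h2
    have hle : U.ncard ≤ (Set.univ : Set V).ncard :=
      Set.ncard_le_ncard (Set.subset_univ U) (Set.toFinite _)
    omega



lemma tiece_three {α : Type*} {U : Set α} (hU : U.Finite) (h3 : 3 ≤ U.ncard) :
    ∃ x ∈ U, ∃ y ∈ U, ∃ z ∈ U, x ≠ y ∧ x ≠ z ∧ y ≠ z := by
  obtain ⟨x, hx⟩ : U.Nonempty := by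
    rw [← Set.ncard_pos hU]; omega
  obtain ⟨y, hy⟩ : (U \ {x}).Nonempty := by
    rw [← Set.ncard_pos hU.diff, Set.ncard_diff_singleton_of_mem hx]; omega
  obtain ⟨z, hz⟩ : ((U \ {x}) \ {y}).Nonempty := by
    rw [← Set.ncard_pos hU.diff.diff,
      Set.ncard_diff_singleton_of_mem hy,
      Set.ncard_diff_singleton_of_mem hx]
    omega
  refine ⟨x, hx, y, hy.1, z, hz.1.1, ?_, ?_, ?_⟩
  · rintro rfl; exact hy.2 rfl
  · rintro rfl; exact hz.1.2 rfl
  · rintro rfl; exact hz.2 rfl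

lemma tiece_Gd_adj {V : Type*} {G : SimpleGraph V} {e : Sym2 V} {x y : V}
    (h : G.Adj x y) (hne : s(x,y) ≠ e) : (G.deleteEdges {e}).Adj x y := by
  rw [deleteEdges_adj]; exact ⟨h, by simpa using hne⟩

lemma tiece_Gd_clique {V : Type*} {G : SimpleGraph V} {u v : V} {T S : Set V}
    (hsub : S ⊆ T) (hT : ∀ x ∈ T, ∀ y ∈ T, x ≠ y → G.Adj x y) (hu : u ∉ S) :
    ∀ x ∈ S, ∀ y ∈ S, x ≠ y → (G.deleteEdges {s(u,v)}).Adj x y := by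
  intro x hx y hy hne
  refine tiece_Gd_adj (hT x (hsub hx) y (hsub hy) hne) ?_
  intro hcontra
  rcases Sym2.eq_iff.mp hcontra with ⟨h1, _⟩ | ⟨_, h2⟩
  · exact hu (h1 ▸ hx)
  · exact hu (h2 ▸ hy)

lemma tiece_pair_clique {V : Type*} {G' : SimpleGraph V} {w₁ w₂ : V} (h : G'.Adj w₁ w₂) :
    ∀ x ∈ ({w₁, w₂} : Set V), ∀ y ∈ ({w₁, w₂} : Set V), x ≠ y → G'.Adj x y := by
  intro x hx y hy hne
  simp only [Set.mem_insert_iff, Set.mem_singleton_iff] at hx hy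
  rcases hx with rfl | rfl <;> rcases hy with rfl | rfl
  · exact absurd rfl hne
  · exact h
  · exact h.symm
  · exact absurd rfl hne

lemma tiece_empty_clique {V : Type*} {G' : SimpleGraph V} :
    ∀ x ∈ (∅ : Set V), ∀ y ∈ (∅ : Set V), x ≠ y → G'.Adj x y := by simp

lemma tiece_Gd_not_adj {V : Type*} {G : SimpleGraph V} {u v x y : V} (h : s(x,y) = s(u,v)) :
    ¬ (G.deleteEdges {s(u,v)}).Adj x y := by
  rw [deleteEdges_adj]
  rintro ⟨-, h2⟩
  exact h2 (by simp [h])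

lemma tiece_ncard3 {α : Type*} {x y z : α} (hxy : x ≠ y) (hxz : x ≠ z) (hyz : y ≠ z) :
    ({x, y, z} : Set α).ncard = 3 := by
  rw [Set.ncard_insert_of_notMem (by simp [hxy, hxz]) (Set.toFinite _),
    Set.ncard_pair hyz]

lemma tiece_pair_set_disj {α : Type*} {a b : α} {S : Set α} (h1 : a ∉ S) (h2 : b ∉ S) :
    Disjoint ({a, b} : Set α) S := by
  rw [Set.disjoint_left]
  rintro w (rfl | rfl)
  · exact h1
  · exact h2

lemma tiece_not_mem_pair {α : Type*} {x a b : α} (h1 : x ≠ a) (h2 : x ≠ b) :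
    x ∉ ({a, b} : Set α) := by simp [h1, h2]

lemma tiece_Gd_le {V : Type*} {G : SimpleGraph V} {e : Sym2 V} {x y : V}
    (h : (G.deleteEdges {e}).Adj x y) : G.Adj x y := (deleteEdges_adj.mp h).1

lemma tiece_ind3 {V : Type*} {H : SimpleGraph V} {x y z : V}
    (h1 : ¬H.Adj x y) (h2 : ¬H.Adj x z) (h3 : ¬H.Adj y z) :
    ∀ a ∈ ({x, y, z} : Set V), ∀ b ∈ ({x, y, z} : Set V), ¬H.Adj a b := by
  intro a ha b hb
  simp only [Set.mem_insert_iff, Set.mem_singleton_iff] at ha hb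
  rcases ha with rfl | rfl | rfl <;> rcases hb with rfl | rfl | rfl
  · exact H.loopless.irrefl _
  · exact h1
  · exact h2
  · exact fun h => h1 h.symm
  · exact H.loopless.irrefl _
  · exact h3
  · exact fun h => h2 h.symm
  · exact fun h => h3 h.symm
  · exact H.loopless.irrefl _

lemma tiece_ind1 {V : Type*} {H : SimpleGraph V} {x : V} :
    ∀ a ∈ ({x} : Set V), ∀ b ∈ ({x} : Set V), ¬H.Adj a b := by
  intro a ha b hb
  simp only [Set.mem_singleton_iff] at ha hb
  subst ha; subst hb
  exact H.loopless.irrefl _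


/-- Type I graphs are edge-critical equimatchable: vertex set `A ∪ B ∪ {s₁, s₂}` with
`|A| = 2q`, `|B| = 2p+1`, `B = B₁ ∪ B₂` a partition into nonempty parts, `A` and `B` cliques,
`{s₁, s₂}` complete to `A`, `s₁` complete to `B₁`, `s₂` complete to `B₂`, and no other
edges. -/
theorem typeI_ece {V : Type*} [Fintype V] (p q : ℕ) (hp : 1 ≤ p) (hq : 1 ≤ q)
    (G : SimpleGraph V) (A B B₁ B₂ : Set V) (s₁ s₂ : V)
    (hs : s₁ ≠ s₂) (hs₁A : s₁ ∉ A) (hs₂A : s₂ ∉ A) (hs₁B : s₁ ∉ B) (hs₂B : s₂ ∉ B)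
    (hABdisj : Disjoint A B)
    (hunion : A ∪ B ∪ {s₁, s₂} = Set.univ)
    (hAcard : A.ncard = 2 * q) (hBcard : B.ncard = 2 * p + 1)
    (hB₁ne : B₁.Nonempty) (hB₂ne : B₂.Nonempty)
    (hBpart : B₁ ∪ B₂ = B) (hBdisj : Disjoint B₁ B₂)
    (hadj : ∀ x y : V, G.Adj x y ↔ x ≠ y ∧
      ((x ∈ A ∧ y ∈ A) ∨ (x ∈ B ∧ y ∈ B) ∨
        ((x = s₁ ∨ x = s₂) ∧ y ∈ A) ∨ ((y = s₁ ∨ y = s₂) ∧ x ∈ A) ∨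
        (x = s₁ ∧ y ∈ B₁) ∨ (y = s₁ ∧ x ∈ B₁) ∨
        (x = s₂ ∧ y ∈ B₂) ∨ (y = s₂ ∧ x ∈ B₂))) :
    ECE G := by
  classical
  have hB₁B : B₁ ⊆ B := hBpart ▸ Set.subset_union_left
  have hB₂B : B₂ ⊆ B := hBpart ▸ Set.subset_union_right
  have hAB : ∀ x, x ∈ A → x ∉ B := fun x hx => Set.disjoint_left.mp hABdisj hx
  have hB12 : ∀ x, x ∈ B₁ → x ∉ B₂ := fun x hx => Set.disjoint_left.mp hBdisj hx
  have hBsplit : ∀ x, x ∈ B → x ∈ B₁ ∨ x ∈ B₂ := fun x hx => by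
    rw [← hBpart] at hx; exact hx
  have hclass : ∀ w : V, w ∈ A ∨ w ∈ B ∨ w = s₁ ∨ w = s₂ := by
    intro w
    have hw : w ∈ A ∪ B ∪ {s₁, s₂} := hunion ▸ Set.mem_univ w
    rcases hw with (h | h) | h
    · exact Or.inl h
    · exact Or.inr (Or.inl h)
    · simp only [Set.mem_insert_iff, Set.mem_singleton_iff] at h
      rcases h with h | h
      · exact Or.inr (Or.inr (Or.inl h))
      · exact Or.inr (Or.inr (Or.inr h))
  have haA : ∀ x ∈ A, ∀ y ∈ A, x ≠ y → G.Adj x y := fun x hx y hy hne =>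
    (hadj x y).mpr ⟨hne, Or.inl ⟨hx, hy⟩⟩
  have haB : ∀ x ∈ B, ∀ y ∈ B, x ≠ y → G.Adj x y := fun x hx y hy hne =>
    (hadj x y).mpr ⟨hne, Or.inr (Or.inl ⟨hx, hy⟩)⟩
  have hs₁adjA : ∀ x ∈ A, G.Adj s₁ x := fun x hx =>
    (hadj s₁ x).mpr ⟨fun h => hs₁A (h ▸ hx), Or.inr (Or.inr (Or.inl ⟨Or.inl rfl, hx⟩))⟩
  have hs₂adjA : ∀ x ∈ A, G.Adj s₂ x := fun x hx =>
    (hadj s₂ x).mpr ⟨fun h => hs₂A (h ▸ hx), Or.inr (Or.inr (Or.inl ⟨Or.inr rfl, hx⟩))⟩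
  have hs₁adjB₁ : ∀ b ∈ B₁, G.Adj s₁ b := fun b hb =>
    (hadj s₁ b).mpr ⟨fun h => hs₁B (h ▸ hB₁B hb),
      Or.inr (Or.inr (Or.inr (Or.inr (Or.inl ⟨rfl, hb⟩))))⟩
  have hs₂adjB₂ : ∀ b ∈ B₂, G.Adj s₂ b := fun b hb =>
    (hadj s₂ b).mpr ⟨fun h => hs₂B (h ▸ hB₂B hb),
      Or.inr (Or.inr (Or.inr (Or.inr (Or.inr (Or.inr (Or.inl ⟨rfl, hb⟩))))))⟩
  have hnAB : ∀ a ∈ A, ∀ b ∈ B, ¬ G.Adj a b := by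
    intro a ha b hb h
    rcases ((hadj a b).mp h).2 with ⟨h1,h2⟩|⟨h1,h2⟩|⟨h1,h2⟩|⟨h1,h2⟩|⟨h1,h2⟩|⟨h1,h2⟩|⟨h1,h2⟩|⟨h1,h2⟩
    · exact hAB b h2 hb
    · exact hAB a ha h1
    · rcases h1 with rfl | rfl
      · exact hs₁A ha
      · exact hs₂A ha
    · rcases h1 with rfl | rfl
      · exact hs₁B hb
      · exact hs₂B hb
    · exact hs₁A (h1 ▸ ha)
    · exact hs₁B (h1 ▸ hb)
    · exact hs₂A (h1 ▸ ha)
    · exact hs₂B (h1 ▸ hb)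
  have hns₁s₂ : ¬ G.Adj s₁ s₂ := by
    intro h
    rcases ((hadj s₁ s₂).mp h).2 with ⟨h1,h2⟩|⟨h1,h2⟩|⟨h1,h2⟩|⟨h1,h2⟩|⟨h1,h2⟩|⟨h1,h2⟩|⟨h1,h2⟩|⟨h1,h2⟩
    · exact hs₁A h1
    · exact hs₁B h1
    · exact hs₂A h2
    · exact hs₁A h2
    · exact hs₂B (hB₁B h2)
    · exact hs₁B (hB₁B h2)
    · exact hs h1
    · exact hs₁B (hB₂B h2)
  have hns₁B₂ : ∀ b ∈ B₂, ¬ G.Adj s₁ b := by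
    intro b hb h
    rcases ((hadj s₁ b).mp h).2 with ⟨h1,h2⟩|⟨h1,h2⟩|⟨h1,h2⟩|⟨h1,h2⟩|⟨h1,h2⟩|⟨h1,h2⟩|⟨h1,h2⟩|⟨h1,h2⟩
    · exact hs₁A h1
    · exact hs₁B h1
    · exact hAB b h2 (hB₂B hb)
    · exact hs₁A h2
    · exact hB12 b h2 hb
    · exact hs₁B (hB₁B h2)
    · exact hs h1
    · exact hs₁B (hB₂B h2)
  have hns₂B₁ : ∀ b ∈ B₁, ¬ G.Adj s₂ b := by
    intro b hb h
    rcases ((hadj s₂ b).mp h).2 with ⟨h1,h2⟩|⟨h1,h2⟩|⟨h1,h2⟩|⟨h1,h2⟩|⟨h1,h2⟩|⟨h1,h2⟩|⟨h1,h2⟩|⟨h1,h2⟩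
    · exact hs₂A h1
    · exact hs₂B h1
    · exact hAB b h2 (hB₁B hb)
    · exact hs₂A h2
    · exact hs h1.symm
    · exact hs₂B (hB₁B h2)
    · exact hB12 b hb h2
    · exact hs₂B (hB₂B h2)
  have hC1 : ∀ w w' : V, w ∈ A → w ≠ w' → ¬G.Adj w w' → w' ∈ B := by
    intro w w' hw hne hn
    rcases hclass w' with h | h | rfl | rfl
    · exact absurd (haA w hw w' h hne) hn
    · exact h
    · exact absurd (hs₁adjA w hw).symm hn
    · exact absurd (hs₂adjA w hw).symm hn
  have hC3 : ∀ w : V, ¬G.Adj s₁ w → ¬G.Adj s₂ w → w ≠ s₁ → w ≠ s₂ → False := by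
    intro w h1 h2 hn1 hn2
    rcases hclass w with h | h | rfl | rfl
    · exact h1 (hs₁adjA w h)
    · rcases hBsplit w h with h' | h'
      · exact h1 (hs₁adjB₁ w h')
      · exact h2 (hs₂adjB₂ w h')
    · exact hn1 rfl
    · exact hn2 rfl
  have hindep3 : ∀ x y z : V, x ≠ y → x ≠ z → y ≠ z →
      ¬G.Adj x y → ¬G.Adj x z → ¬G.Adj y z → False := by
    intro x y z hxy hxz hyz nxy nxz nyz
    rcases hclass x with hx | hx | rfl | rfl
    · exact nyz (haB y (hC1 x y hx hxy nxy) z (hC1 x z hx hxz nxz) hyz)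
    · rcases hclass y with hy | hy | rfl | rfl
      · exact nxz (haB x hx z (hC1 y z hy hyz nyz) hxz)
      · exact nxy (haB x hx y hy hxy)
      · -- y = s₁
        rcases hBsplit x hx with hx1 | hx2
        · exact nxy (hs₁adjB₁ x hx1).symm
        · rcases hclass z with hz | hz | rfl | rfl
          · exact nyz (hs₁adjA z hz)
          · exact nxz (haB x hx z hz hxz)
          · exact hyz rfl
          · rcases hBsplit x hx with hx1 | hx2'
            · exact nxy (hs₁adjB₁ x hx1).symm
            · exact nxz (hs₂adjB₂ x hx2').symm
      · -- y = s₂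
        rcases hBsplit x hx with hx1 | hx2
        · rcases hclass z with hz | hz | rfl | rfl
          · exact nyz (hs₂adjA z hz)
          · exact nxz (haB x hx z hz hxz)
          · exact nxz (hs₁adjB₁ x hx1).symm
          · exact hyz rfl
        · exact nxy (hs₂adjB₂ x hx2).symm
    · -- x = s₁
      rcases hclass y with hy | hy | rfl | rfl
      · exact nxy (hs₁adjA y hy)
      · rcases hBsplit y hy with hy1 | hy2
        · exact nxy (hs₁adjB₁ y hy1)
        · rcases hclass z with hz | hz | rfl | rfl
          · exact nxz (hs₁adjA z hz)
          · exact nyz (haB y hy z hz hyz)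
          · exact hxz rfl
          · exact hC3 y nxy (fun h => nyz h.symm) (fun h => hxy h.symm) (fun h => hyz h)
      · exact hxy rfl
      · exact hC3 z nxz nyz (fun h => hxz h.symm) (fun h => hyz h.symm)
    · -- x = s₂
      rcases hclass y with hy | hy | rfl | rfl
      · exact nxy (hs₂adjA y hy)
      · rcases hBsplit y hy with hy1 | hy2
        · rcases hclass z with hz | hz | rfl | rfl
          · exact nxz (hs₂adjA z hz)
          · exact nyz (haB y hy z hz hyz)
          · exact hC3 y (fun h => nyz h.symm) nxy (fun h => hyz h) (fun h => hxy h.symm)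
          · exact hxz rfl
        · exact nxy (hs₂adjB₂ y hy2)
      · exact hC3 z nyz nxz (fun h => hyz h.symm) (fun h => hxz h.symm)
      · exact hxy rfl
  have hdisjABs : Disjoint (A ∪ B) ({s₁, s₂} : Set V) := by
    rw [Set.disjoint_right]
    rintro w hw hw'
    simp only [Set.mem_insert_iff, Set.mem_singleton_iff] at hw
    rcases hw' with h | h <;> rcases hw with rfl | rfl
    · exact hs₁A h
    · exact hs₂A h
    · exact hs₁B h
    · exact hs₂B h
  have hN : (Set.univ : Set V).ncard = 2 * p + 2 * q + 3 := by
    rw [← hunion, Set.ncard_union_eq hdisjABs (Set.toFinite _) (Set.toFinite _),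
      Set.ncard_union_eq hABdisj (Set.toFinite _) (Set.toFinite _), hAcard, hBcard,
      Set.ncard_pair hs]
    omega
  have hmaxcount : ∀ M : G.Subgraph, IsMaximalMatching G M → M.edgeSet.ncard = p + q + 1 := by
    intro M hM
    have hMm := hM.1
    have hcard2 : M.verts.ncard = 2 * M.edgeSet.ncard := tiece_matching_card hMm
    have hUc : (Set.univ \ M.verts).ncard + M.verts.ncard = (Set.univ : Set V).ncard := by
      rw [Set.ncard_diff (Set.subset_univ _) (Set.toFinite _)]
      have := Set.ncard_le_ncard (Set.subset_univ M.verts) (Set.toFinite _)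
      omega
    have hind := (tiece_maxmatch_iff hMm).mp hM
    have hU2 : (Set.univ \ M.verts).ncard ≤ 2 := by
      by_contra hgt
      push_neg at hgt
      obtain ⟨x, hx, y, hy, z, hz, hxy, hxz, hyz⟩ := tiece_three (Set.toFinite _) hgt
      exact hindep3 x y z hxy hxz hyz
        (hind x y hx.2 hy.2) (hind x z hx.2 hz.2) (hind y z hy.2 hz.2)
    omega
  constructor
  · intro M₁ M₂ h₁ h₂
    rw [hmaxcount M₁ h₁, hmaxcount M₂ h₂]
  -- ===== ECE part =====
  obtain ⟨b₁0, hb₁0⟩ := hB₁ne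
  obtain ⟨b₂0, hb₂0⟩ := hB₂ne
  have hb₁0B : b₁0 ∈ B := hB₁B hb₁0
  have hb₂0B : b₂0 ∈ B := hB₂B hb₂0
  have hb12ne : b₁0 ≠ b₂0 := fun h => hB12 b₁0 hb₁0 (h ▸ hb₂0)
  have hAfin : A.Finite := Set.toFinite _
  have hAne : A.Nonempty := by
    rw [← Set.ncard_pos hAfin, hAcard]; omega
  obtain ⟨a0, ha0⟩ := hAne
  have hAdiffne : ∀ x : V, (A \ {x}).Nonempty := by
    intro x
    rw [← Set.ncard_pos hAfin.diff]
    have h1 := Set.le_ncard_diff {x} A (Set.toFinite _)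
    rw [Set.ncard_singleton, hAcard] at h1
    omega
  have hBdiff2ne : ∀ x y : V, (B \ ({x, y} : Set V)).Nonempty := by
    intro x y
    rw [← Set.ncard_pos (Set.toFinite B).diff]
    have h1 := Set.le_ncard_diff {x, y} B (Set.toFinite _)
    have h2 : ({x, y} : Set V).ncard ≤ 2 := by
      have h3 := Set.ncard_insert_le x ({y} : Set V)
      rw [Set.ncard_singleton] at h3
      omega
    rw [hBcard] at h1
    omega
  have hevenpair : ∀ x y : V, x ≠ y → Even (({x, y} : Set V).ncard) := by
    intro x y h; rw [Set.ncard_pair h]; exact ⟨1, rfl⟩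
  have hevenempty : Even ((∅ : Set V).ncard) := by simp
  have hevenA : Even A.ncard := by rw [hAcard]; exact ⟨q, by omega⟩
  have hevenA2 : ∀ x y : V, x ∈ A → y ∈ A → x ≠ y → Even ((A \ ({x, y} : Set V)).ncard) := by
    intro x y hx hy hne
    rw [Set.ncard_diff (by rintro w (rfl | rfl); exacts [hx, hy]),
      Set.ncard_pair hne, hAcard]
    exact ⟨q - 1, by omega⟩
  have hevenB1 : ∀ x : V, x ∈ B → Even ((B \ ({x} : Set V)).ncard) := by
    intro x hx
    rw [Set.ncard_diff (by rintro w rfl; exact hx), Set.ncard_singleton, hBcard]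
    exact ⟨p, by omega⟩
  have hevenB3 : ∀ x y z : V, x ∈ B → y ∈ B → z ∈ B → x ≠ y → x ≠ z → y ≠ z →
      Even ((B \ ({x, y, z} : Set V)).ncard) := by
    intro x y z hx hy hz hxy hxz hyz
    rw [Set.ncard_diff (by rintro w (rfl | rfl | rfl); exacts [hx, hy, hz]),
      tiece_ncard3 hxy hxz hyz, hBcard]
    exact ⟨p - 1, by omega⟩
  have caseSA : ∀ t t' : V, ∀ Bt' : Set V,
      t ≠ t' → t ∉ A → t' ∉ A → t ∉ B → t' ∉ B →
      (∀ x : V, x ∈ A ∨ x ∈ B ∨ x = t ∨ x = t') →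
      (∀ x ∈ A, G.Adj t x) → (∀ x ∈ A, G.Adj t' x) →
      Bt' ⊆ B → Bt'.Nonempty → (∀ b ∈ Bt', ¬G.Adj t b) →
      ∀ a ∈ A, ¬ Equimatchable (G.deleteEdges {s(t, a)}) := by
    intro t t' Bt' htt' htA ht'A htB ht'B hcls htadjA ht'adjA hBt'B hBt'ne htnBt' a ha hEq
    obtain ⟨b', hb'⟩ := hBt'ne
    have hb'B : b' ∈ B := hBt'B hb'
    obtain ⟨c₁, hc₁⟩ := hAdiffne a
    obtain ⟨c₂, hc₂⟩ := hAdiffne c₁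
    have hc₁A : c₁ ∈ A := hc₁.1
    have hc₂A : c₂ ∈ A := hc₂.1
    have hc₁a : c₁ ≠ a := fun h => hc₁.2 (by simp [h])
    have hc₂c₁ : c₂ ≠ c₁ := fun h => hc₂.2 (by simp [h])
    have htne : ∀ x ∈ A, t ≠ x := fun x hx h => htA (h ▸ hx)
    have ht'ne : ∀ x ∈ A, t' ≠ x := fun x hx h => ht'A (h ▸ hx)
    have htneB : ∀ x ∈ B, t ≠ x := fun x hx h => htB (h ▸ hx)
    have ht'neB : ∀ x ∈ B, t' ≠ x := fun x hx h => ht'B (h ▸ hx)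
    have hABne : ∀ x ∈ A, ∀ y ∈ B, x ≠ y := fun x hx y hy h => hAB x hx (h ▸ hy)
    -- big matching
    have hadj1 : (G.deleteEdges {s(t, a)}).Adj t c₁ :=
      tiece_Gd_adj (htadjA c₁ hc₁A) (sym2_ne_r (htne a ha) hc₁a)
    have hadj2 : (G.deleteEdges {s(t, a)}).Adj t' c₂ :=
      tiece_Gd_adj (ht'adjA c₂ hc₂A) (sym2_ne_l htt'.symm (fun h => htA (h ▸ hc₂A)))
    obtain ⟨Mb, hMbmax, hMbcount⟩ := tiece_assemble (G.deleteEdges {s(t, a)})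
      {t, c₁} {t', c₂} (A \ {c₁, c₂}) (B \ {b'}) {b'}
      (hevenpair t c₁ (htne c₁ hc₁A)) (hevenpair t' c₂ (ht'ne c₂ hc₂A))
      (hevenA2 c₁ c₂ hc₁A hc₂A (Ne.symm hc₂c₁)) (hevenB1 b' hb'B)
      (tiece_pair_clique hadj1) (tiece_pair_clique hadj2)
      (tiece_Gd_clique Set.diff_subset haA (fun h => htA h.1))
      (tiece_Gd_clique Set.diff_subset haB (fun h => htB h.1))
      (tiece_pair_set_disj (tiece_not_mem_pair htt' (htne c₂ hc₂A))
        (tiece_not_mem_pair (Ne.symm (ht'ne c₁ hc₁A)) hc₂c₁.symm))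
      (tiece_pair_set_disj (fun h => htA h.1) (fun h => h.2 (by simp)))
      (tiece_pair_set_disj (fun h => htB h.1) (fun h => hAB c₁ hc₁A h.1))
      (tiece_pair_set_disj (fun h => ht'A h.1) (fun h => h.2 (by simp)))
      (tiece_pair_set_disj (fun h => ht'B h.1) (fun h => hAB c₂ hc₂A h.1))
      (hABdisj.mono Set.diff_subset Set.diff_subset)
      (by
        ext w
        simp only [Set.mem_union, Set.mem_insert_iff, Set.mem_singleton_iff, Set.mem_diff,
          Set.mem_univ, true_and]
        constructor
        · rintro ((((h | h) | (h | h)) | ⟨hw, -⟩) | ⟨hw, hne⟩)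
          · exact fun hb => htneB b' hb'B (h.symm.trans hb)
          · exact fun hb => hABne c₁ hc₁A b' hb'B (h.symm.trans hb)
          · exact fun hb => ht'neB b' hb'B (h.symm.trans hb)
          · exact fun hb => hABne c₂ hc₂A b' hb'B (h.symm.trans hb)
          · exact fun hb => hABne w hw b' hb'B hb
          · exact hne
        · intro hne
          rcases hcls w with hw | hw | rfl | rfl
          · by_cases h1 : w = c₁
            · exact Or.inl (Or.inl (Or.inl (Or.inr h1)))
            · by_cases h2 : w = c₂
              · exact Or.inl (Or.inl (Or.inr (Or.inr h2)))
              · refine Or.inl (Or.inr ⟨hw, ?_⟩)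
                rintro (h | h)
                · exact h1 h
                · exact h2 h
          · exact Or.inr ⟨hw, hne⟩
          · exact Or.inl (Or.inl (Or.inl (Or.inl rfl)))
          · exact Or.inl (Or.inl (Or.inr (Or.inl rfl))))
      tiece_ind1
    -- small matching
    have hadj3 : (G.deleteEdges {s(t, a)}).Adj t' c₁ :=
      tiece_Gd_adj (ht'adjA c₁ hc₁A) (sym2_ne_l htt'.symm (fun h => htA (h ▸ hc₁A)))
    obtain ⟨Ms, hMsmax, hMscount⟩ := tiece_assemble (G.deleteEdges {s(t, a)})
      {t', c₁} (∅ : Set V) (A \ {a, c₁}) (B \ {b'}) {t, a, b'}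
      (hevenpair t' c₁ (ht'ne c₁ hc₁A)) hevenempty
      (hevenA2 a c₁ ha hc₁A (Ne.symm hc₁a)) (hevenB1 b' hb'B)
      (tiece_pair_clique hadj3) tiece_empty_clique
      (tiece_Gd_clique Set.diff_subset haA (fun h => htA h.1))
      (tiece_Gd_clique Set.diff_subset haB (fun h => htB h.1))
      (Set.disjoint_empty _)
      (tiece_pair_set_disj (fun h => ht'A h.1) (fun h => h.2 (by simp)))
      (tiece_pair_set_disj (fun h => ht'B h.1) (fun h => hAB c₁ hc₁A h.1))
      (Set.empty_disjoint _) (Set.empty_disjoint _)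
      (hABdisj.mono Set.diff_subset Set.diff_subset)
      (by
        ext w
        simp only [Set.mem_union, Set.mem_insert_iff, Set.mem_singleton_iff, Set.mem_diff,
          Set.mem_empty_iff_false, Set.mem_univ, true_and, or_false]
        constructor
        · rintro (((h0 | h0) | ⟨hw, hne2⟩) | ⟨hw, hne⟩)
          · rintro (h | h | h)
            · exact htt' (h0.symm.trans h).symm
            · exact ht'A ((h0.symm.trans h) ▸ ha)
            · exact ht'B ((h0.symm.trans h) ▸ hb'B)
          · rintro (h | h | h)
            · exact htA ((h0.symm.trans h) ▸ hc₁A)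
            · exact hc₁a (h0.symm.trans h)
            · exact hAB c₁ hc₁A ((h0.symm.trans h) ▸ hb'B)
          · rintro (h | h | h)
            · exact htA (h ▸ hw)
            · exact hne2 (Or.inl h)
            · exact hAB w hw (h ▸ hb'B)
          · rintro (h | h | h)
            · exact htB (h ▸ hw)
            · exact hAB a ha (h.symm ▸ hw)
            · exact hne h
        · intro hne
          push_neg at hne
          obtain ⟨hne1, hne2, hne3⟩ := hne
          rcases hcls w with hw | hw | rfl | rfl
          · by_cases h1 : w = c₁
            · exact Or.inl (Or.inl (Or.inr h1))
            · refine Or.inl (Or.inr ⟨hw, ?_⟩)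
              rintro (h | h)
              · exact hne2 h
              · exact h1 h
          · exact Or.inr ⟨hw, hne3⟩
          · exact absurd rfl hne1
          · exact Or.inl (Or.inl (Or.inl rfl)))
      (tiece_ind3 (tiece_Gd_not_adj rfl)
        (fun h => htnBt' b' hb' (tiece_Gd_le h))
        (fun h => hnAB a ha b' hb'B (tiece_Gd_le h)))
    have heq := hEq Mb Ms hMbmax hMsmax
    rw [Set.ncard_singleton] at hMbcount
    rw [tiece_ncard3 (htne a ha) (htneB b' hb'B) (hABne a ha b' hb'B)] at hMscount
    omega
  have hABne : ∀ x ∈ A, ∀ y ∈ B, x ≠ y := fun x hx y hy h => hAB x hx (h ▸ hy)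
  have caseSB : ∀ t t' : V, ∀ Bt : Set V,
      t ≠ t' → t ∉ A → t' ∉ A → t ∉ B → t' ∉ B →
      (∀ x : V, x ∈ A ∨ x ∈ B ∨ x = t ∨ x = t') →
      (∀ x ∈ A, G.Adj t x) → (∀ x ∈ A, G.Adj t' x) →
      Bt ⊆ B → ¬G.Adj t t' → (∀ b ∈ Bt, ¬G.Adj t' b) →
      ∀ b ∈ Bt, ¬ Equimatchable (G.deleteEdges {s(t, b)}) := by
    intro t t' Bt htt' htA ht'A htB ht'B hcls htadjA ht'adjA hBtB hntt' ht'nBt b hb hEq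
    have hbB : b ∈ B := hBtB hb
    obtain ⟨c₂, hc₂⟩ := hAdiffne a0
    have hc₂A : c₂ ∈ A := hc₂.1
    have hc₂a0 : c₂ ≠ a0 := fun h => hc₂.2 (by simp [h])
    have htne : ∀ x ∈ A, t ≠ x := fun x hx h => htA (h ▸ hx)
    have ht'ne : ∀ x ∈ A, t' ≠ x := fun x hx h => ht'A (h ▸ hx)
    have htneB : ∀ x ∈ B, t ≠ x := fun x hx h => htB (h ▸ hx)
    have ht'neB : ∀ x ∈ B, t' ≠ x := fun x hx h => ht'B (h ▸ hx)
    have hadj1 : (G.deleteEdges {s(t, b)}).Adj t a0 :=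
      tiece_Gd_adj (htadjA a0 ha0) (sym2_ne_r (htneB b hbB) (hABne a0 ha0 b hbB))
    have hadj2 : (G.deleteEdges {s(t, b)}).Adj t' c₂ :=
      tiece_Gd_adj (ht'adjA c₂ hc₂A) (sym2_ne_l htt'.symm (Ne.symm (htne c₂ hc₂A)))
    obtain ⟨Mb, hMbmax, hMbcount⟩ := tiece_assemble (G.deleteEdges {s(t, b)})
      {t, a0} {t', c₂} (A \ {a0, c₂}) (B \ {b}) {b}
      (hevenpair t a0 (htne a0 ha0)) (hevenpair t' c₂ (ht'ne c₂ hc₂A))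
      (hevenA2 a0 c₂ ha0 hc₂A (Ne.symm hc₂a0)) (hevenB1 b hbB)
      (tiece_pair_clique hadj1) (tiece_pair_clique hadj2)
      (tiece_Gd_clique Set.diff_subset haA (fun h => htA h.1))
      (tiece_Gd_clique Set.diff_subset haB (fun h => htB h.1))
      (tiece_pair_set_disj (tiece_not_mem_pair htt' (htne c₂ hc₂A))
        (tiece_not_mem_pair (Ne.symm (ht'ne a0 ha0)) (Ne.symm hc₂a0)))
      (tiece_pair_set_disj (fun h => htA h.1) (fun h => h.2 (by simp)))
      (tiece_pair_set_disj (fun h => htB h.1) (fun h => hAB a0 ha0 h.1))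
      (tiece_pair_set_disj (fun h => ht'A h.1) (fun h => h.2 (by simp)))
      (tiece_pair_set_disj (fun h => ht'B h.1) (fun h => hAB c₂ hc₂A h.1))
      (hABdisj.mono Set.diff_subset Set.diff_subset)
      (by
        ext w
        simp only [Set.mem_union, Set.mem_insert_iff, Set.mem_singleton_iff, Set.mem_diff,
          Set.mem_univ, true_and]
        constructor
        · rintro ((((h | h) | (h | h)) | ⟨hw, -⟩) | ⟨hw, hne⟩)
          · exact fun hb2 => htneB b hbB (h.symm.trans hb2)
          · exact fun hb2 => hABne a0 ha0 b hbB (h.symm.trans hb2)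
          · exact fun hb2 => ht'neB b hbB (h.symm.trans hb2)
          · exact fun hb2 => hABne c₂ hc₂A b hbB (h.symm.trans hb2)
          · exact fun hb2 => hABne w hw b hbB hb2
          · exact hne
        · intro hne
          rcases hcls w with hw | hw | rfl | rfl
          · by_cases h1 : w = a0
            · exact Or.inl (Or.inl (Or.inl (Or.inr h1)))
            · by_cases h2 : w = c₂
              · exact Or.inl (Or.inl (Or.inr (Or.inr h2)))
              · refine Or.inl (Or.inr ⟨hw, ?_⟩)
                rintro (h | h)
                · exact h1 h
                · exact h2 h
          · exact Or.inr ⟨hw, hne⟩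
          · exact Or.inl (Or.inl (Or.inl (Or.inl rfl)))
          · exact Or.inl (Or.inl (Or.inr (Or.inl rfl))))
      tiece_ind1
    obtain ⟨Ms, hMsmax, hMscount⟩ := tiece_assemble (G.deleteEdges {s(t, b)})
      (∅ : Set V) (∅ : Set V) A (B \ {b}) {t, t', b}
      hevenempty hevenempty hevenA (hevenB1 b hbB)
      tiece_empty_clique tiece_empty_clique
      (tiece_Gd_clique Set.Subset.rfl haA htA)
      (tiece_Gd_clique Set.diff_subset haB (fun h => htB h.1))
      (Set.empty_disjoint _) (Set.empty_disjoint _) (Set.empty_disjoint _)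
      (Set.empty_disjoint _) (Set.empty_disjoint _)
      (hABdisj.mono Set.Subset.rfl Set.diff_subset)
      (by
        ext w
        simp only [Set.mem_union, Set.mem_insert_iff, Set.mem_singleton_iff, Set.mem_diff,
          Set.mem_empty_iff_false, Set.mem_univ, true_and, false_or]
        constructor
        · rintro (hw | ⟨hw, hne⟩)
          · rintro (h | h | h)
            · exact htA (h ▸ hw)
            · exact ht'A (h ▸ hw)
            · exact hAB w hw (h ▸ hbB)
          · rintro (h | h | h)
            · exact htB (h ▸ hw)
            · exact ht'B (h ▸ hw)
            · exact hne h
        · intro hne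
          push_neg at hne
          obtain ⟨hne1, hne2, hne3⟩ := hne
          rcases hcls w with hw | hw | rfl | rfl
          · exact Or.inl hw
          · exact Or.inr ⟨hw, hne3⟩
          · exact absurd rfl hne1
          · exact absurd rfl hne2)
      (tiece_ind3 (fun h => hntt' (tiece_Gd_le h)) (tiece_Gd_not_adj rfl)
        (fun h => ht'nBt b hb (tiece_Gd_le h)))
    have heq := hEq Mb Ms hMbmax hMsmax
    rw [Set.ncard_singleton] at hMbcount
    rw [tiece_ncard3 htt' (htneB b hbB) (ht'neB b hbB)] at hMscount
    omega
  have caseBB : ∀ t t' : V,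
      t ≠ t' → t ∉ A → t' ∉ A → t ∉ B → t' ∉ B →
      (∀ x : V, x ∈ A ∨ x ∈ B ∨ x = t ∨ x = t') →
      (∀ x ∈ A, G.Adj t x) → (∀ x ∈ A, G.Adj t' x) →
      ∀ u v : V, u ∈ B → v ∈ B → u ≠ v → ∀ c ∈ B, G.Adj t c → c ≠ u → c ≠ v →
      ¬ Equimatchable (G.deleteEdges {s(u, v)}) := by
    intro t t' htt' htA ht'A htB ht'B hcls htadjA ht'adjA u v hu hv huvne c hcB htc hcu hcv hEq
    obtain ⟨c₂, hc₂⟩ := hAdiffne a0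
    have hc₂A : c₂ ∈ A := hc₂.1
    have hc₂a0 : c₂ ≠ a0 := fun h => hc₂.2 (by simp [h])
    have htne : ∀ x ∈ A, t ≠ x := fun x hx h => htA (h ▸ hx)
    have ht'ne : ∀ x ∈ A, t' ≠ x := fun x hx h => ht'A (h ▸ hx)
    have htneB : ∀ x ∈ B, t ≠ x := fun x hx h => htB (h ▸ hx)
    have ht'neB : ∀ x ∈ B, t' ≠ x := fun x hx h => ht'B (h ▸ hx)
    have hadj1 : (G.deleteEdges {s(u, v)}).Adj t a0 :=
      tiece_Gd_adj (htadjA a0 ha0) (sym2_ne_l (htneB u hu) (hABne a0 ha0 u hu))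
    have hadj2 : (G.deleteEdges {s(u, v)}).Adj t' c₂ :=
      tiece_Gd_adj (ht'adjA c₂ hc₂A) (sym2_ne_l (ht'neB u hu) (hABne c₂ hc₂A u hu))
    obtain ⟨Mb, hMbmax, hMbcount⟩ := tiece_assemble (G.deleteEdges {s(u, v)})
      {t, a0} {t', c₂} (A \ {a0, c₂}) (B \ {u}) {u}
      (hevenpair t a0 (htne a0 ha0)) (hevenpair t' c₂ (ht'ne c₂ hc₂A))
      (hevenA2 a0 c₂ ha0 hc₂A (Ne.symm hc₂a0)) (hevenB1 u hu)
      (tiece_pair_clique hadj1) (tiece_pair_clique hadj2)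
      (tiece_Gd_clique Set.diff_subset haA (fun h => hAB u h.1 hu))
      (tiece_Gd_clique Set.diff_subset haB (fun h => h.2 rfl))
      (tiece_pair_set_disj (tiece_not_mem_pair htt' (htne c₂ hc₂A))
        (tiece_not_mem_pair (Ne.symm (ht'ne a0 ha0)) (Ne.symm hc₂a0)))
      (tiece_pair_set_disj (fun h => htA h.1) (fun h => h.2 (by simp)))
      (tiece_pair_set_disj (fun h => htB h.1) (fun h => hAB a0 ha0 h.1))
      (tiece_pair_set_disj (fun h => ht'A h.1) (fun h => h.2 (by simp)))
      (tiece_pair_set_disj (fun h => ht'B h.1) (fun h => hAB c₂ hc₂A h.1))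
      (hABdisj.mono Set.diff_subset Set.diff_subset)
      (by
        ext w
        simp only [Set.mem_union, Set.mem_insert_iff, Set.mem_singleton_iff, Set.mem_diff,
          Set.mem_univ, true_and]
        constructor
        · rintro ((((h | h) | (h | h)) | ⟨hw, -⟩) | ⟨hw, hne⟩)
          · exact fun hb2 => htneB u hu (h.symm.trans hb2)
          · exact fun hb2 => hABne a0 ha0 u hu (h.symm.trans hb2)
          · exact fun hb2 => ht'neB u hu (h.symm.trans hb2)
          · exact fun hb2 => hABne c₂ hc₂A u hu (h.symm.trans hb2)
          · exact fun hb2 => hABne w hw u hu hb2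
          · exact hne
        · intro hne
          rcases hcls w with hw | hw | rfl | rfl
          · by_cases h1 : w = a0
            · exact Or.inl (Or.inl (Or.inl (Or.inr h1)))
            · by_cases h2 : w = c₂
              · exact Or.inl (Or.inl (Or.inr (Or.inr h2)))
              · refine Or.inl (Or.inr ⟨hw, ?_⟩)
                rintro (h | h)
                · exact h1 h
                · exact h2 h
          · exact Or.inr ⟨hw, hne⟩
          · exact Or.inl (Or.inl (Or.inl (Or.inl rfl)))
          · exact Or.inl (Or.inl (Or.inr (Or.inl rfl))))
      tiece_ind1
    have hadj3 : (G.deleteEdges {s(u, v)}).Adj t c :=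
      tiece_Gd_adj htc (sym2_ne_l (htneB u hu) hcu)
    obtain ⟨Ms, hMsmax, hMscount⟩ := tiece_assemble (G.deleteEdges {s(u, v)})
      {t, c} {t', c₂} (A \ {a0, c₂}) (B \ {u, v, c}) {a0, u, v}
      (hevenpair t c (htneB c hcB)) (hevenpair t' c₂ (ht'ne c₂ hc₂A))
      (hevenA2 a0 c₂ ha0 hc₂A (Ne.symm hc₂a0))
      (hevenB3 u v c hu hv hcB huvne (Ne.symm hcu) (Ne.symm hcv))
      (tiece_pair_clique hadj3) (tiece_pair_clique hadj2)
      (tiece_Gd_clique Set.diff_subset haA (fun h => hAB u h.1 hu))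
      (tiece_Gd_clique Set.diff_subset haB (fun h => h.2 (by simp)))
      (tiece_pair_set_disj (tiece_not_mem_pair htt' (htne c₂ hc₂A))
        (tiece_not_mem_pair (Ne.symm (ht'neB c hcB)) (Ne.symm (hABne c₂ hc₂A c hcB))))
      (tiece_pair_set_disj (fun h => htA h.1) (fun h => hAB c h.1 hcB))
      (tiece_pair_set_disj (fun h => htB h.1) (fun h => h.2 (by simp)))
      (tiece_pair_set_disj (fun h => ht'A h.1) (fun h => h.2 (by simp)))
      (tiece_pair_set_disj (fun h => ht'B h.1) (fun h => hAB c₂ hc₂A h.1))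
      (hABdisj.mono Set.diff_subset Set.diff_subset)
      (by
        ext w
        simp only [Set.mem_union, Set.mem_insert_iff, Set.mem_singleton_iff, Set.mem_diff,
          Set.mem_univ, true_and]
        constructor
        · rintro ((((h0 | h0) | (h0 | h0)) | ⟨hw, hne2⟩) | ⟨hw, hne⟩)
          · rintro (h | h | h)
            · exact htA ((h0.symm.trans h) ▸ ha0)
            · exact htB ((h0.symm.trans h) ▸ hu)
            · exact htB ((h0.symm.trans h) ▸ hv)
          · rintro (h | h | h)
            · exact hABne a0 ha0 c hcB (h0.symm.trans h).symm
            · exact hcu (h0.symm.trans h)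
            · exact hcv (h0.symm.trans h)
          · rintro (h | h | h)
            · exact ht'A ((h0.symm.trans h) ▸ ha0)
            · exact ht'B ((h0.symm.trans h) ▸ hu)
            · exact ht'B ((h0.symm.trans h) ▸ hv)
          · rintro (h | h | h)
            · exact hc₂a0 (h0.symm.trans h)
            · exact hABne c₂ hc₂A u hu (h0.symm.trans h)
            · exact hABne c₂ hc₂A v hv (h0.symm.trans h)
          · rintro (h | h | h)
            · exact hne2 (Or.inl h)
            · exact hABne w hw u hu h
            · exact hABne w hw v hv h
          · rintro (h | h | h)
            · exact hABne a0 ha0 w hw h.symm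
            · exact hne (Or.inl h)
            · exact hne (Or.inr (Or.inl h))
        · intro hne
          push_neg at hne
          obtain ⟨hne1, hne2, hne3⟩ := hne
          rcases hcls w with hw | hw | rfl | rfl
          · by_cases h2 : w = c₂
            · exact Or.inl (Or.inl (Or.inr (Or.inr h2)))
            · refine Or.inl (Or.inr ⟨hw, ?_⟩)
              rintro (h | h)
              · exact hne1 h
              · exact h2 h
          · by_cases h1 : w = c
            · exact Or.inl (Or.inl (Or.inl (Or.inr h1)))
            · refine Or.inr ⟨hw, ?_⟩
              rintro (h | h | h)
              · exact hne2 h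
              · exact hne3 h
              · exact h1 h
          · exact Or.inl (Or.inl (Or.inl (Or.inl rfl)))
          · exact Or.inl (Or.inl (Or.inr (Or.inl rfl))))
      (tiece_ind3 (fun h => hnAB a0 ha0 u hu (tiece_Gd_le h))
        (fun h => hnAB a0 ha0 v hv (tiece_Gd_le h)) (tiece_Gd_not_adj rfl))
    have heq := hEq Mb Ms hMbmax hMsmax
    rw [Set.ncard_singleton] at hMbcount
    rw [tiece_ncard3 (hABne a0 ha0 u hu) (hABne a0 ha0 v hv) huvne] at hMscount
    omega
  have hs₁ne : ∀ x ∈ A, s₁ ≠ x := fun x hx h => hs₁A (h ▸ hx)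
  have hs₂ne : ∀ x ∈ A, s₂ ≠ x := fun x hx h => hs₂A (h ▸ hx)
  have hs₁neB : ∀ x ∈ B, s₁ ≠ x := fun x hx h => hs₁B (h ▸ hx)
  have hs₂neB : ∀ x ∈ B, s₂ ≠ x := fun x hx h => hs₂B (h ▸ hx)
  have caseAA : ∀ u v : V, u ∈ A → v ∈ A → u ≠ v →
      ¬ Equimatchable (G.deleteEdges {s(u, v)}) := by
    intro u v hu hv huvne hEq
    obtain ⟨b0, hb0⟩ := hBdiff2ne b₁0 b₂0
    have hb0B : b0 ∈ B := hb0.1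
    have hb0ne1 : b0 ≠ b₁0 := fun h => hb0.2 (by simp [h])
    have hb0ne2 : b0 ≠ b₂0 := fun h => hb0.2 (by simp [h])
    have hadj1 : (G.deleteEdges {s(u, v)}).Adj s₁ u :=
      tiece_Gd_adj (hs₁adjA u hu) (sym2_ne_r (hs₁ne v hv) huvne)
    have hadj2 : (G.deleteEdges {s(u, v)}).Adj s₂ v :=
      tiece_Gd_adj (hs₂adjA v hv) (sym2_ne_l (hs₂ne u hu) (Ne.symm huvne))
    obtain ⟨Mb, hMbmax, hMbcount⟩ := tiece_assemble (G.deleteEdges {s(u, v)})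
      {s₁, u} {s₂, v} (A \ {u, v}) (B \ {b₁0}) {b₁0}
      (hevenpair s₁ u (hs₁ne u hu)) (hevenpair s₂ v (hs₂ne v hv))
      (hevenA2 u v hu hv huvne) (hevenB1 b₁0 hb₁0B)
      (tiece_pair_clique hadj1) (tiece_pair_clique hadj2)
      (tiece_Gd_clique Set.diff_subset haA (fun h => h.2 (by simp)))
      (tiece_Gd_clique Set.diff_subset haB (fun h => hAB u hu h.1))
      (tiece_pair_set_disj (tiece_not_mem_pair hs (hs₁ne v hv))
        (tiece_not_mem_pair (Ne.symm (hs₂ne u hu)) huvne))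
      (tiece_pair_set_disj (fun h => hs₁A h.1) (fun h => h.2 (by simp)))
      (tiece_pair_set_disj (fun h => hs₁B h.1) (fun h => hAB u hu h.1))
      (tiece_pair_set_disj (fun h => hs₂A h.1) (fun h => h.2 (by simp)))
      (tiece_pair_set_disj (fun h => hs₂B h.1) (fun h => hAB v hv h.1))
      (hABdisj.mono Set.diff_subset Set.diff_subset)
      (by
        ext w
        simp only [Set.mem_union, Set.mem_insert_iff, Set.mem_singleton_iff, Set.mem_diff,
          Set.mem_univ, true_and]
        constructor
        · rintro ((((h | h) | (h | h)) | ⟨hw, -⟩) | ⟨hw, hne⟩)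
          · exact fun hb2 => hs₁neB b₁0 hb₁0B (h.symm.trans hb2)
          · exact fun hb2 => hABne u hu b₁0 hb₁0B (h.symm.trans hb2)
          · exact fun hb2 => hs₂neB b₁0 hb₁0B (h.symm.trans hb2)
          · exact fun hb2 => hABne v hv b₁0 hb₁0B (h.symm.trans hb2)
          · exact fun hb2 => hABne w hw b₁0 hb₁0B hb2
          · exact hne
        · intro hne
          rcases hclass w with hw | hw | rfl | rfl
          · by_cases h1 : w = u
            · exact Or.inl (Or.inl (Or.inl (Or.inr h1)))
            · by_cases h2 : w = v
              · exact Or.inl (Or.inl (Or.inr (Or.inr h2)))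
              · refine Or.inl (Or.inr ⟨hw, ?_⟩)
                rintro (h | h)
                · exact h1 h
                · exact h2 h
          · exact Or.inr ⟨hw, hne⟩
          · exact Or.inl (Or.inl (Or.inl (Or.inl rfl)))
          · exact Or.inl (Or.inl (Or.inr (Or.inl rfl))))
      tiece_ind1
    have hadj3 : (G.deleteEdges {s(u, v)}).Adj s₁ b₁0 :=
      tiece_Gd_adj (hs₁adjB₁ b₁0 hb₁0)
        (sym2_ne_l (hs₁ne u hu) (Ne.symm (hABne u hu b₁0 hb₁0B)))
    have hadj4 : (G.deleteEdges {s(u, v)}).Adj s₂ b₂0 :=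
      tiece_Gd_adj (hs₂adjB₂ b₂0 hb₂0)
        (sym2_ne_l (hs₂ne u hu) (Ne.symm (hABne u hu b₂0 hb₂0B)))
    obtain ⟨Ms, hMsmax, hMscount⟩ := tiece_assemble (G.deleteEdges {s(u, v)})
      {s₁, b₁0} {s₂, b₂0} (A \ {u, v}) (B \ {b0, b₁0, b₂0}) {u, v, b0}
      (hevenpair s₁ b₁0 (hs₁neB b₁0 hb₁0B)) (hevenpair s₂ b₂0 (hs₂neB b₂0 hb₂0B))
      (hevenA2 u v hu hv huvne)
      (hevenB3 b0 b₁0 b₂0 hb0B hb₁0B hb₂0B hb0ne1 hb0ne2 hb12ne)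
      (tiece_pair_clique hadj3) (tiece_pair_clique hadj4)
      (tiece_Gd_clique Set.diff_subset haA (fun h => h.2 (by simp)))
      (tiece_Gd_clique Set.diff_subset haB (fun h => hAB u hu h.1))
      (tiece_pair_set_disj (tiece_not_mem_pair hs (hs₁neB b₂0 hb₂0B))
        (tiece_not_mem_pair (Ne.symm (hs₂neB b₁0 hb₁0B)) hb12ne))
      (tiece_pair_set_disj (fun h => hs₁A h.1) (fun h => hAB b₁0 h.1 hb₁0B))
      (tiece_pair_set_disj (fun h => hs₁B h.1) (fun h => h.2 (by simp)))
      (tiece_pair_set_disj (fun h => hs₂A h.1) (fun h => hAB b₂0 h.1 hb₂0B))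
      (tiece_pair_set_disj (fun h => hs₂B h.1) (fun h => h.2 (by simp)))
      (hABdisj.mono Set.diff_subset Set.diff_subset)
      (by
        ext w
        simp only [Set.mem_union, Set.mem_insert_iff, Set.mem_singleton_iff, Set.mem_diff,
          Set.mem_univ, true_and]
        constructor
        · rintro ((((h0 | h0) | (h0 | h0)) | ⟨hw, hne2⟩) | ⟨hw, hne⟩)
          · rintro (h | h | h)
            · exact hs₁ne u hu (h0.symm.trans h)
            · exact hs₁ne v hv (h0.symm.trans h)
            · exact hs₁neB b0 hb0B (h0.symm.trans h)
          · rintro (h | h | h)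
            · exact hABne u hu b₁0 hb₁0B (h0.symm.trans h).symm
            · exact hABne v hv b₁0 hb₁0B (h0.symm.trans h).symm
            · exact hb0ne1 (h0.symm.trans h).symm
          · rintro (h | h | h)
            · exact hs₂ne u hu (h0.symm.trans h)
            · exact hs₂ne v hv (h0.symm.trans h)
            · exact hs₂neB b0 hb0B (h0.symm.trans h)
          · rintro (h | h | h)
            · exact hABne u hu b₂0 hb₂0B (h0.symm.trans h).symm
            · exact hABne v hv b₂0 hb₂0B (h0.symm.trans h).symm
            · exact hb0ne2 (h0.symm.trans h).symm
          · rintro (h | h | h)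
            · exact hne2 (Or.inl h)
            · exact hne2 (Or.inr h)
            · exact hABne w hw b0 hb0B h
          · rintro (h | h | h)
            · exact hABne u hu w hw h.symm
            · exact hABne v hv w hw h.symm
            · exact hne (Or.inl h)
        · intro hne
          push_neg at hne
          obtain ⟨hne1, hne2, hne3⟩ := hne
          rcases hclass w with hw | hw | rfl | rfl
          · refine Or.inl (Or.inr ⟨hw, ?_⟩)
            rintro (h | h)
            · exact hne1 h
            · exact hne2 h
          · by_cases h1 : w = b₁0
            · exact Or.inl (Or.inl (Or.inl (Or.inr h1)))
            · by_cases h2 : w = b₂0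
              · exact Or.inl (Or.inl (Or.inr (Or.inr h2)))
              · refine Or.inr ⟨hw, ?_⟩
                rintro (h | h | h)
                · exact hne3 h
                · exact h1 h
                · exact h2 h
          · exact Or.inl (Or.inl (Or.inl (Or.inl rfl)))
          · exact Or.inl (Or.inl (Or.inr (Or.inl rfl))))
      (tiece_ind3 (tiece_Gd_not_adj rfl)
        (fun h => hnAB u hu b0 hb0B (tiece_Gd_le h))
        (fun h => hnAB v hv b0 hb0B (tiece_Gd_le h)))
    have heq := hEq Mb Ms hMbmax hMsmax
    rw [Set.ncard_singleton] at hMbcount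
    rw [tiece_ncard3 huvne (hABne u hu b0 hb0B) (hABne v hv b0 hb0B)] at hMscount
    omega
  have hclass2 : ∀ x : V, x ∈ A ∨ x ∈ B ∨ x = s₂ ∨ x = s₁ := by
    intro x
    rcases hclass x with h | h | h | h
    · exact Or.inl h
    · exact Or.inr (Or.inl h)
    · exact Or.inr (Or.inr (Or.inr h))
    · exact Or.inr (Or.inr (Or.inl h))
  intro u v huv
  obtain ⟨hne, harms⟩ := (hadj u v).mp huv
  rcases harms with ⟨h1, h2⟩ | ⟨h1, h2⟩ | ⟨h1, h2⟩ | ⟨h1, h2⟩ | ⟨h1, h2⟩ | ⟨h1, h2⟩ | ⟨h1, h2⟩ | ⟨h1, h2⟩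
  · exact caseAA u v h1 h2 hne
  · obtain ⟨c, hc⟩ := hBdiff2ne u v
    have hcB : c ∈ B := hc.1
    have hcu : c ≠ u := fun h => hc.2 (by simp [h])
    have hcv : c ≠ v := fun h => hc.2 (by simp [h])
    rcases hBsplit c hcB with h3 | h3
    · exact caseBB s₁ s₂ hs hs₁A hs₂A hs₁B hs₂B hclass hs₁adjA hs₂adjA u v h1 h2 hne c hcB
        (hs₁adjB₁ c h3) hcu hcv
    · exact caseBB s₂ s₁ hs.symm hs₂A hs₁A hs₂B hs₁B hclass2 hs₂adjA hs₁adjA u v h1 h2 hne c hcB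
        (hs₂adjB₂ c h3) hcu hcv
  · rcases h1 with h1 | h1
    · rw [h1]
      exact caseSA s₁ s₂ B₂ hs hs₁A hs₂A hs₁B hs₂B hclass hs₁adjA hs₂adjA hB₂B ⟨b₂0, hb₂0⟩
        hns₁B₂ v h2
    · rw [h1]
      exact caseSA s₂ s₁ B₁ hs.symm hs₂A hs₁A hs₂B hs₁B hclass2 hs₂adjA hs₁adjA hB₁B ⟨b₁0, hb₁0⟩
        hns₂B₁ v h2
  · rcases h1 with h1 | h1
    · rw [Sym2.eq_swap, h1]
      exact caseSA s₁ s₂ B₂ hs hs₁A hs₂A hs₁B hs₂B hclass hs₁adjA hs₂adjA hB₂B ⟨b₂0, hb₂0⟩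
        hns₁B₂ u h2
    · rw [Sym2.eq_swap, h1]
      exact caseSA s₂ s₁ B₁ hs.symm hs₂A hs₁A hs₂B hs₁B hclass2 hs₂adjA hs₁adjA hB₁B ⟨b₁0, hb₁0⟩
        hns₂B₁ u h2
  · rw [h1]
    exact caseSB s₁ s₂ B₁ hs hs₁A hs₂A hs₁B hs₂B hclass hs₁adjA hs₂adjA hB₁B hns₁s₂ hns₂B₁ v h2
  · rw [Sym2.eq_swap, h1]
    exact caseSB s₁ s₂ B₁ hs hs₁A hs₂A hs₁B hs₂B hclass hs₁adjA hs₂adjA hB₁B hns₁s₂ hns₂B₁ u h2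
  · rw [h1]
    exact caseSB s₂ s₁ B₂ hs.symm hs₂A hs₁A hs₂B hs₁B hclass2 hs₂adjA hs₁adjA hB₂B
      (fun h => hns₁s₂ h.symm) hns₁B₂ v h2
  · rw [Sym2.eq_swap, h1]
    exact caseSB s₂ s₁ B₂ hs.symm hs₂A hs₁A hs₂B hs₁B hclass2 hs₂adjA hs₁adjA hB₂B
      (fun h => hns₁s₂ h.symm) hns₁B₂ u h2
end

section
/- Every factor-critical edge-critical equimatchable graph with at least one edge is vertex-critical equimatchable. -/
open SimpleGraph

section Aux
variable {V : Type*} {G : SimpleGraph V}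

lemma matching_eq_of_adj_imp {M M' : G.Subgraph} (hM : M.IsMatching) (hM' : M'.IsMatching)
    (h : ∀ x y, M'.Adj x y ↔ M.Adj x y) : M' = M := by
  have hs : M'.support = M.support := by
    ext x
    simp only [SimpleGraph.Subgraph.mem_support]
    exact exists_congr fun w => h x w
  exact SimpleGraph.Subgraph.ext
    (by rw [← hM'.support_eq_verts, ← hM.support_eq_verts, hs])
    (by ext x y; exact h x y)

lemma isMaximalMatching_iff {M : G.Subgraph} (hM : M.IsMatching) :
    IsMaximalMatching G M ↔ ∀ ⦃x y⦄, G.Adj x y → x ∈ M.verts ∨ y ∈ M.verts := by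
  constructor
  · rintro ⟨-, hmax⟩ x y hxy
    by_contra hc
    push_neg at hc
    obtain ⟨hx, hy⟩ := hc
    have hd : Disjoint M.support (G.subgraphOfAdj hxy).support := by
      rw [hM.support_eq_verts, SimpleGraph.support_subgraphOfAdj]
      rw [Set.disjoint_right]
      rintro a (rfl | rfl) <;> assumption
    have hm2 : (M ⊔ G.subgraphOfAdj hxy).IsMatching :=
      hM.sup (SimpleGraph.Subgraph.IsMatching.subgraphOfAdj hxy) hd
    have heq := hmax _ hm2 le_sup_left
    have hadj : (M ⊔ G.subgraphOfAdj hxy).Adj x y := by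
      simp [SimpleGraph.Subgraph.sup_adj]
    rw [heq] at hadj
    exact hx (M.edge_vert hadj)
  · intro h
    refine ⟨hM, fun M' hM' hle => ?_⟩
    refine matching_eq_of_adj_imp hM hM' fun x y => ⟨?_, fun hxy => hle.2 hxy⟩
    intro hxy
    by_contra hnot
    have key : ∀ a b : V, M'.Adj a b → ¬ M.Adj a b → a ∉ M.verts := by
      intro a b hab hnab ha
      obtain ⟨w, hw, huniq⟩ := hM ha
      have h1 : M'.Adj a w := hle.2 hw
      obtain ⟨w', hw', huniq'⟩ := hM' (M'.edge_vert hab)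
      have hbw : b = w := (huniq' b hab).trans (huniq' w h1).symm
      exact hnab (hbw ▸ hw)
    have hx := key x y hxy hnot
    have hy := key y x hxy.symm (fun hc => hnot hc.symm)
    rcases h (M'.adj_sub hxy) with h' | h' <;> [exact hx h'; exact hy h']

lemma perfect_isMaximal {M : G.Subgraph} (h : M.IsPerfectMatching) : IsMaximalMatching G M :=
  (isMaximalMatching_iff h.1).mpr (fun x _ _ => Or.inl (h.2 x))

end Aux

section Aux2
variable {V : Type*} {G : SimpleGraph V}

lemma matching_ncard_verts [Finite V] {M : G.Subgraph} (hM : M.IsMatching) :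
    M.verts.ncard = 2 * M.edgeSet.ncard := by
  classical
  cases nonempty_fintype V
  have hdeg : ∀ v : M.verts, M.coe.degree v = 1 := by
    intro v
    rw [SimpleGraph.Subgraph.coe_degree]
    have h := (SimpleGraph.Subgraph.isMatching_iff_forall_degree.mp hM) v v.2
    convert h using 2
  have h1 : Fintype.card M.verts = 2 * M.coe.edgeFinset.card := by
    rw [← M.coe.sum_degrees_eq_twice_card_edges]
    have : Fintype.card ↑M.verts = ∑ _v : M.verts, 1 := by simp
    rw [this]
    refine Finset.sum_congr rfl fun v _ => ?_
    have h := (hdeg v).symm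
    convert h using 2
  have h2 : M.coe.edgeFinset.card = M.coe.edgeSet.ncard := by
    rw [Set.ncard_eq_toFinset_card']
    congr 1
  have h3 : M.edgeSet.ncard = M.coe.edgeSet.ncard := by
    rw [← SimpleGraph.Subgraph.image_coe_edgeSet_coe,
      Set.ncard_image_of_injective _ (Sym2.map.injective Subtype.val_injective)]
  have h4 : M.verts.ncard = Fintype.card M.verts := by
    rw [Set.ncard_eq_toFinset_card', Set.toFinset_card]
  omega

lemma exists_maximal_matching [Finite V] (M : G.Subgraph) (hM : M.IsMatching) :
    ∃ N, M ≤ N ∧ IsMaximalMatching G N := by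
  classical
  cases nonempty_fintype V
  set S : Set ℕ := {n | ∃ N : G.Subgraph, N.IsMatching ∧ M ≤ N ∧ N.edgeSet.ncard = n} with hS
  have hne : S.Nonempty := ⟨_, M, hM, le_refl M, rfl⟩
  have hbdd : BddAbove S := by
    refine ⟨Nat.card (Sym2 V), ?_⟩
    rintro n ⟨N, -, -, rfl⟩
    calc N.edgeSet.ncard ≤ (Set.univ : Set (Sym2 V)).ncard :=
          Set.ncard_le_ncard (Set.subset_univ _) Set.finite_univ
      _ = Nat.card (Sym2 V) := by rw [Set.ncard_univ]
  obtain ⟨N, hNm, hle, hcard⟩ := Nat.sSup_mem hne hbdd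
  refine ⟨N, hle, (isMaximalMatching_iff hNm).mpr ?_⟩
  intro x y hxy
  by_contra hc
  push_neg at hc
  obtain ⟨hx, hy⟩ := hc
  have hd : Disjoint N.support (G.subgraphOfAdj hxy).support := by
    rw [hNm.support_eq_verts, SimpleGraph.support_subgraphOfAdj]
    rw [Set.disjoint_right]
    rintro a (rfl | rfl) <;> assumption
  have hm2 : (N ⊔ G.subgraphOfAdj hxy).IsMatching :=
    hNm.sup (SimpleGraph.Subgraph.IsMatching.subgraphOfAdj hxy) hd
  have hnotmem : s(x, y) ∉ N.edgeSet := by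
    intro hmem
    exact hx (N.edge_vert (SimpleGraph.Subgraph.mem_edgeSet.mp hmem))
  have hcard2 : (N ⊔ G.subgraphOfAdj hxy).edgeSet.ncard = N.edgeSet.ncard + 1 := by
    rw [SimpleGraph.Subgraph.edgeSet_sup, SimpleGraph.edgeSet_subgraphOfAdj,
      Set.union_singleton, Set.ncard_insert_of_notMem hnotmem]
  have hmem2 : N.edgeSet.ncard + 1 ∈ S := ⟨_, hm2, le_trans hle le_sup_left, hcard2⟩
  have := le_csSup hbdd hmem2
  omega
end Aux2
section Aux3
variable {V : Type*} {G : SimpleGraph V}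

lemma equimatchable_maximal_perfect [Finite V] (heq : Equimatchable G)
    {P : G.Subgraph} (hP : P.IsPerfectMatching) {M : G.Subgraph}
    (hM : IsMaximalMatching G M) : M.IsPerfectMatching := by
  have hcard := heq M P hM (perfect_isMaximal hP)
  have h1 : M.verts.ncard = P.verts.ncard := by
    rw [matching_ncard_verts hM.1, matching_ncard_verts hP.1, hcard]
  have h2 : P.verts = Set.univ := hP.2.verts_eq_univ
  refine ⟨hM.1, fun w => ?_⟩
  have h3 : M.verts = Set.univ := by
    apply Set.eq_of_subset_of_ncard_le (Set.subset_univ _) ?_ (Set.toFinite _)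
    rw [h1, h2]
  rw [h3]
  trivial

lemma equimatchable_randomly [Finite V] (heq : Equimatchable G)
    {P : G.Subgraph} (hP : P.IsPerfectMatching) :
    ∀ M : G.Subgraph, M.IsMatching → ∃ N : G.Subgraph, M ≤ N ∧ N.IsPerfectMatching := by
  intro M hM
  obtain ⟨N, hle, hNmax⟩ := exists_maximal_matching M hM
  exact ⟨N, hle, equimatchable_maximal_perfect heq hP hNmax⟩

/-- Reinterpret a subgraph of `G.deleteEdges s` as a subgraph of `G`. -/
def upSG {s : Set (Sym2 V)} (M : (G.deleteEdges s).Subgraph) : G.Subgraph where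
  verts := M.verts
  Adj := M.Adj
  adj_sub h := (G.deleteEdges_le (s := s)) (M.adj_sub h)
  edge_vert h := M.edge_vert h
  symm := ⟨fun _ _ h => M.symm.symm _ _ h⟩

lemma upSG_verts {s : Set (Sym2 V)} (M : (G.deleteEdges s).Subgraph) :
    (upSG M).verts = M.verts := rfl

lemma upSG_edgeSet {s : Set (Sym2 V)} (M : (G.deleteEdges s).Subgraph) :
    (upSG M).edgeSet = M.edgeSet := rfl

lemma upSG_matching {s : Set (Sym2 V)} {M : (G.deleteEdges s).Subgraph}
    (hM : M.IsMatching) : (upSG M).IsMatching := fun _ hx => hM hx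

/-- Reinterpret a subgraph of `G.deleteEdges s` avoiding `v` as a subgraph of the
vertex-deleted graph. -/
def downSG {s : Set (Sym2 V)} (v : V) (M : (G.deleteEdges s).Subgraph) :
    (G.induce {u | u ≠ v}).Subgraph where
  verts := {w | (w : V) ∈ M.verts}
  Adj a b := M.Adj (a : V) (b : V)
  adj_sub h := (G.deleteEdges_le (s := s)) (M.adj_sub h)
  edge_vert h := M.edge_vert h
  symm := ⟨fun _ _ h => M.symm.symm _ _ h⟩

lemma downSG_matching {s : Set (Sym2 V)} {v : V} {M : (G.deleteEdges s).Subgraph}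
    (hM : M.IsMatching) (hv : v ∉ M.verts) : (downSG v M).IsMatching := by
  rintro ⟨a, ha⟩ hav
  obtain ⟨w, hw, huniq⟩ := hM hav
  have hwv : w ≠ v := by
    rintro rfl
    exact hv (M.edge_vert (M.symm.symm _ _ hw))
  refine ⟨⟨w, hwv⟩, hw, ?_⟩
  rintro ⟨y, hy⟩ hav
  exact Subtype.ext (huniq y hav)

end Aux3

/-- Every factor-critical edge-critical equimatchable graph with at least one edge is
vertex-critical equimatchable. -/
theorem fc_ece_vce {V : Type*} [Fintype V] (G : SimpleGraph V)
    (hfc : FactorCritical G) (hece : ECE G) (hedge : G.edgeSet.Nonempty) :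
    VCE G := by
  classical
  refine ⟨hece.1, fun v hv => ?_⟩
  -- Step 1: find a neighbor `u` of `v`.
  obtain ⟨u, hvu⟩ : ∃ u, G.Adj v u := by
    obtain ⟨e, he⟩ := hedge
    induction e with
    | h a b =>
      rw [SimpleGraph.mem_edgeSet] at he
      obtain ⟨u₀, hu₀⟩ : ∃ u₀ : V, u₀ ≠ v := by
        by_cases hav : a = v
        · exact ⟨b, fun hbv => he.ne (hav.trans hbv.symm)⟩
        · exact ⟨a, hav⟩
      obtain ⟨P', hP'⟩ := hfc u₀
      have hvS : v ∈ {u : V | u ≠ u₀} := Ne.symm hu₀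
      obtain ⟨w, hw, -⟩ := hP'.1 (hP'.2 ⟨v, hvS⟩)
      exact ⟨↑w, P'.adj_sub hw⟩
  -- Step 2: contradict edge-criticality at the edge `vu`.
  refine hece.2 v u hvu ?_
  have hvune : v ≠ u := G.ne_of_adj hvu
  obtain ⟨P₀, hP₀⟩ := hfc v
  have key : ∀ N : (G.deleteEdges {s(v, u)}).Subgraph,
      IsMaximalMatching (G.deleteEdges {s(v, u)}) N → IsMaximalMatching G (upSG N) := by
    intro N hN
    refine (isMaximalMatching_iff (upSG_matching hN.1)).mpr ?_
    intro x y hxy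
    by_contra hc
    push_neg at hc
    obtain ⟨hx, hy⟩ := hc
    rw [upSG_verts] at hx hy
    by_cases hcase : s(x, y) = s(v, u)
    · -- both `v` and `u` are exposed by `N`; extend `N` inside `G - v` to find an
      -- augmenting edge avoiding `s(v,u)`.
      have hvN : v ∉ N.verts ∧ u ∉ N.verts := by
        rw [Sym2.eq_iff] at hcase
        rcases hcase with ⟨rfl, rfl⟩ | ⟨rfl, rfl⟩
        · exact ⟨hx, hy⟩
        · exact ⟨hy, hx⟩
      have hMd := downSG_matching hN.1 hvN.1
      obtain ⟨P, hle, hP⟩ := equimatchable_randomly hv hP₀ _ hMd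
      have huS : u ∈ {w : V | w ≠ v} := Ne.symm hvune
      obtain ⟨w, hw, -⟩ := hP.1 (hP.2 ⟨u, huS⟩)
      have hwN : (w : V) ∉ N.verts := by
        intro hmem
        obtain ⟨z, hz, -⟩ := hMd (show w ∈ (downSG v N).verts from hmem)
        have hPz : P.Adj w z := hle.2 hz
        obtain ⟨z', hz', huniq⟩ := hP.1 (hP.2 w)
        have hzu : z = ⟨u, huS⟩ := (huniq z hPz).trans (huniq _ hw.symm).symm
        rw [hzu] at hz
        exact hvN.2 (N.edge_vert (N.symm.symm _ _ hz))
      have hGadj : G.Adj u (w : V) := P.adj_sub hw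
      have hne2 : s(u, (w : V)) ∉ ({s(v, u)} : Set (Sym2 V)) := by
        rw [Set.mem_singleton_iff, Sym2.eq_iff]
        push_neg
        exact ⟨fun h _ => hvune h.symm, fun _ => w.2⟩
      have hG'adj : (G.deleteEdges {s(v, u)}).Adj u w := by
        rw [SimpleGraph.deleteEdges_adj]
        exact ⟨hGadj, hne2⟩
      rcases (isMaximalMatching_iff hN.1).mp hN hG'adj with h' | h'
      · exact hvN.2 h'
      · exact hwN h'
    · have hG'adj : (G.deleteEdges {s(v, u)}).Adj x y := by
        rw [SimpleGraph.deleteEdges_adj]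
        exact ⟨hxy, by simpa using hcase⟩
      rcases (isMaximalMatching_iff hN.1).mp hN hG'adj with h' | h'
      · exact hx h'
      · exact hy h'
  intro M₁ M₂ h₁ h₂
  have heq := hece.1 (upSG M₁) (upSG M₂) (key M₁ h₁) (key M₂ h₂)
  rwa [upSG_edgeSet, upSG_edgeSet] at heq
end
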